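/- Let C = B + 1 ∈ 𝔽₂[[X]] where B is the generating series of the Baum–Sweet sequence, so C has zero constant term and coefficient of X equal to 1, and let P be the compositional inverse of C (i.e., C(P(X)) = P(C(X)) = X). Then the coefficient sequence (p_n) of P satisfies p_0 = 0, p_2 = 0, and p_n = 1 for all other n. -/

import Mathlib

open PowerSeries Finset


lemma psq (f : PowerSeries (ZMod 2)) :
    f * f = PowerSeries.mk (fun n => if n % 2 = 0 then coeff (R := ZMod 2) (n / 2) f else 0) := by
  ext n
  rw [coeff_mul, Finset.Nat.sum_antidiagonal_eq_sum_range_succ_mk, coeff_mk]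
  set a : ℕ → ZMod 2 := fun k => coeff (R := ZMod 2) k f with ha
  have hsplit := Finset.sum_filter_add_sum_filter_not (range (n + 1))
      (fun k => 2 * k = n) (fun k => a k * a (n - k))
  rw [← hsplit]
  have h1 : ∑ k ∈ (range (n+1)).filter (fun k => 2 * k = n), a k * a (n - k)
      = if n % 2 = 0 then a (n / 2) else 0 := by
    have hmul : ∀ x : ZMod 2, x * x = x := by decide
    split
    · next h =>
      have : (range (n+1)).filter (fun k => 2 * k = n) = {n / 2} := by
        ext k; simp only [Finset.mem_filter, Finset.mem_range, Finset.mem_singleton]; omega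
      rw [this, Finset.sum_singleton, show n - n / 2 = n / 2 from by omega, hmul]
    · next h =>
      have : (range (n+1)).filter (fun k => 2 * k = n) = ∅ := by
        ext k; simp only [Finset.mem_filter, Finset.mem_range, Finset.notMem_empty, iff_false]
        omega
      rw [this, Finset.sum_empty]
  have h2 : ∑ k ∈ (range (n+1)).filter (fun k => ¬ 2 * k = n), a k * a (n - k) = 0 := by
    apply Finset.sum_involution (fun k _ => n - k)
    · intro k hk
      simp only [Finset.mem_filter, Finset.mem_range] at hk
      rw [show n - (n - k) = k from by omega]
      have : ∀ x y : ZMod 2, x * y + y * x = 0 := by decide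
      exact this _ _
    · intro k hk _
      simp only [Finset.mem_filter, Finset.mem_range] at hk; omega
    · intro k hk
      simp only [Finset.mem_filter, Finset.mem_range] at hk ⊢; omega
    · intro k hk
      simp only [Finset.mem_filter, Finset.mem_range] at hk; omega
  rw [h1, h2, add_zero]

lemma baum_key (b : ℕ → ZMod 2) (h0 : b 0 = 1)
    (h1 : ∀ n, b (2 * n + 1) = b n)
    (h2 : ∀ n, b (4 * n) = b n)
    (h3 : ∀ n, b (4 * n + 2) = 0) :
    X * PowerSeries.mk b + (PowerSeries.mk b) ^ 3 = 1 := by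
  set B := PowerSeries.mk b with hBdef
  have hB2 : B * B = PowerSeries.mk (fun n => if n % 2 = 0 then b (n / 2) else 0) := by
    rw [psq]; ext n; rw [hBdef]; simp [coeff_mk]
  have hB4 : B * B * (B * B) =
      PowerSeries.mk (fun n => if n % 4 = 0 then b (n / 4) else 0) := by
    rw [hB2, psq]
    ext n; simp only [coeff_mk]
    by_cases h : n % 4 = 0
    · rw [if_pos (by omega : n % 2 = 0), if_pos (by omega : (n/2) % 2 = 0), if_pos h,
        show n/2/2 = n/4 from by omega]
    · rw [if_neg h]
      by_cases h' : n % 2 = 0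
      · rw [if_pos h', if_neg (by omega : ¬ (n/2) % 2 = 0)]
      · rw [if_neg h']
  have hB : B = X * (B * B) + B * B * (B * B) := by
    rw [hB4, hB2]
    ext n
    rw [map_add]
    rw [hBdef, coeff_mk]
    cases n with
    | zero =>
        simp [coeff_zero_eq_constantCoeff, constantCoeff_X, constantCoeff_mk]
    | succ m =>
        rw [coeff_succ_X_mul, coeff_mk, coeff_mk]
        have hm : m % 4 = 0 ∨ m % 4 = 1 ∨ m % 4 = 2 ∨ m % 4 = 3 := by omega
        obtain h | h | h | h := hm
        · obtain ⟨k, rfl⟩ : ∃ k, m = 4 * k := ⟨m / 4, by omega⟩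
          rw [if_pos (by omega : (4*k) % 2 = 0), if_neg (by omega : ¬ (4*k+1) % 4 = 0),
            add_zero, show (4*k)/2 = 2*k from by omega,
            show 4*k+1 = 2*(2*k)+1 from by ring, h1]
        · obtain ⟨k, rfl⟩ : ∃ k, m = 4 * k + 1 := ⟨m / 4, by omega⟩
          rw [if_neg (by omega : ¬ (4*k+1) % 2 = 0), if_neg (by omega : ¬ (4*k+1+1) % 4 = 0),
            add_zero, show 4*k+1+1 = 4*k+2 from by ring]
          exact h3 k
        · obtain ⟨k, rfl⟩ : ∃ k, m = 4 * k + 2 := ⟨m / 4, by omega⟩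
          rw [if_pos (by omega : (4*k+2) % 2 = 0), if_neg (by omega : ¬ (4*k+2+1) % 4 = 0),
            add_zero, show (4*k+2)/2 = 2*k+1 from by omega,
            show 4*k+2+1 = 2*(2*k+1)+1 from by ring, h1]
        · obtain ⟨k, rfl⟩ : ∃ k, m = 4 * k + 3 := ⟨m / 4, by omega⟩
          rw [if_neg (by omega : ¬ (4*k+3) % 2 = 0), if_pos (by omega : (4*k+3+1) % 4 = 0),
            zero_add, show (4*k+3+1)/4 = k+1 from by omega,
            show 4*k+3+1 = 4*(k+1) from by ring, h2]
  have hI : B * B⁻¹ = 1 :=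
    PowerSeries.mul_inv_cancel _ (by rw [hBdef, constantCoeff_mk, h0]; exact one_ne_zero)
  have e1 : B * (X * B + B ^ 3) = B := by
    rw [show B * (X * B + B ^ 3) = X * (B * B) + B * B * (B * B) from by ring]
    exact hB.symm
  linear_combination B⁻¹ * e1 - (X * B + B ^ 3 - 1) * hI


/-- `SubstEq f a h` says that substituting the power series `a` (with zero constant term)
for `X` in `f` yields `h`: for each `n`, the `n`-th coefficient of the truncated
composition `Σ_{k ≤ n} f_k a^k` equals the `n`-th coefficient of `h`. (Since `a` has zero
constant term, terms with `k > n` do not contribute to the `n`-th coefficient.) -/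
def SubstEq (f a h : PowerSeries (ZMod 2)) : Prop :=
  ∀ n : ℕ, (PowerSeries.coeff (R := ZMod 2) n)
      (∑ k ∈ Finset.range (n + 1), PowerSeries.C (R := ZMod 2) ((PowerSeries.coeff (R := ZMod 2) k) f) * a ^ k)
    = (PowerSeries.coeff (R := ZMod 2) n) h

/-- Let `B ∈ 𝔽₂[[X]]` be the generating series of the Baum–Sweet sequence, `C = B + 1`,
and `P` the compositional inverse of `C` (so `C(P(X)) = P(C(X)) = X`). Then the coefficients
`p_n` of `P` satisfy `p_0 = 0`, `p_2 = 0`, and `p_n = 1` for all other `n`. -/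
theorem baumSweet_variant_one_formal_inverse
    (b : ℕ → ZMod 2) (h0 : b 0 = 1)
    (h1 : ∀ n, b (2 * n + 1) = b n)
    (h2 : ∀ n, b (4 * n) = b n)
    (h3 : ∀ n, b (4 * n + 2) = 0)
    (P : PowerSeries (ZMod 2))
    (hP0 : PowerSeries.constantCoeff (R := ZMod 2) P = 0)
    (hCP : SubstEq (PowerSeries.mk b + 1) P PowerSeries.X)
    (hPC : SubstEq P (PowerSeries.mk b + 1) PowerSeries.X) :
    (PowerSeries.coeff (R := ZMod 2) 0) P = 0 ∧ (PowerSeries.coeff (R := ZMod 2) 2) P = 0 ∧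
      ∀ n : ℕ, n ≠ 0 → n ≠ 2 → (PowerSeries.coeff (R := ZMod 2) n) P = 1 := by
  have key := baum_key b h0 h1 h2 h3
  set B := PowerSeries.mk b with hBdef
  have hI : B * B⁻¹ = 1 :=
    PowerSeries.mul_inv_cancel _ (by rw [hBdef, constantCoeff_mk, h0]; exact one_ne_zero)
  have h2z : (2 : PowerSeries (ZMod 2)) = 0 := by
    have : (2 : PowerSeries (ZMod 2)) = C (R := ZMod 2) 2 := by
      rw [map_ofNat]
    rw [this, show (2 : ZMod 2) = 0 from rfl, map_zero]
  -- C = B + 1 = X * D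
  have hC0 : constantCoeff (R := ZMod 2) (B + 1) = 0 := by
    rw [map_add, hBdef, constantCoeff_mk, h0, map_one]
    decide
  obtain ⟨D, hD⟩ : (X : PowerSeries (ZMod 2)) ∣ (B + 1) := X_dvd_iff.mpr hC0
  have hD0 : constantCoeff (R := ZMod 2) D = 1 := by
    have e : coeff (R := ZMod 2) 1 (B + 1) = 1 := by
      rw [map_add, hBdef, coeff_mk, coeff_one, if_neg one_ne_zero, add_zero,
        show (1:ℕ) = 2*0+1 from by norm_num, h1, h0]
    rw [hD, show (1:ℕ) = 0 + 1 from rfl, coeff_succ_X_mul, coeff_zero_eq_constantCoeff] at e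
    exact e
  have diag : ∀ n : ℕ, coeff (R := ZMod 2) n ((B + 1) ^ n) = 1 := by
    intro n
    rw [hD, mul_pow, coeff_X_pow_mul', if_pos le_rfl, Nat.sub_self,
      coeff_zero_eq_constantCoeff, map_pow, hD0, one_pow]
  have high : ∀ n : ℕ, coeff (R := ZMod 2) n ((B + 1) ^ (n + 1) * B⁻¹) = 0 := by
    intro n
    rw [hD, mul_pow, mul_assoc, coeff_X_pow_mul', if_neg (by omega)]
  -- the candidate coefficients
  set q : ℕ → ZMod 2 := fun k => if k = 0 ∨ k = 2 then 0 else 1 with hqdef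
  have hQ : ∀ n : ℕ, (coeff (R := ZMod 2) n)
      (∑ k ∈ range (n + 1), C (R := ZMod 2) (q k) * (B + 1) ^ k) = coeff (R := ZMod 2) n X := by
    intro n
    match n with
    | 0 => simp [hqdef, coeff_one]
    | 1 =>
        rw [show (1:ℕ) + 1 = 2 from rfl, Finset.sum_range_succ, Finset.sum_range_one]
        have e : coeff (R := ZMod 2) 1 (B + 1) = 1 := by
          rw [map_add, hBdef, coeff_mk, coeff_one, if_neg one_ne_zero, add_zero,
            show (1:ℕ) = 2*0+1 from by norm_num, h1, h0]
        simp [hqdef, coeff_one, coeff_C_mul, e, coeff_X]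
    | (m + 2) =>
        set n := m + 2 with hn
        have hterm : ∀ k, C (R := ZMod 2) (q k) * (B + 1) ^ k
            = (B + 1) ^ k - (if k = 0 then (1 : PowerSeries (ZMod 2)) else 0)
              - (if k = 2 then (B + 1) ^ 2 else 0) := by
          intro k
          by_cases hk0 : k = 0
          · subst hk0; simp [hqdef]
          by_cases hk2 : k = 2
          · subst hk2; simp [hqdef]
          · simp [hqdef, hk0, hk2]
        rw [Finset.sum_congr rfl (fun k _ => hterm k), Finset.sum_sub_distrib,
          Finset.sum_sub_distrib, Finset.sum_ite_eq' (range (n+1)) 0 (fun _ => (1:PowerSeries (ZMod 2))),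
          Finset.sum_ite_eq' (range (n+1)) 2 (fun _ => (B+1)^2),
          if_pos (Finset.mem_range.mpr (by omega)), if_pos (Finset.mem_range.mpr (by omega))]
        have geo := geom_sum_mul (B + 1) (n + 1)
        have hT : (∑ k ∈ range (n+1), (B + 1) ^ k) - 1 - (B + 1) ^ 2
            = X + (B + 1) ^ (n + 1) * B⁻¹ := by
          linear_combination (B⁻¹) * geo
            + (X + B^2 - (∑ k ∈ range (n+1), (B + 1) ^ k)) * hI
            - B⁻¹ * key - (B⁻¹ + B + 1) * h2z
        rw [hT, map_add, high n, add_zero]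
  -- uniqueness of coefficients
  have hq : ∀ n : ℕ, coeff (R := ZMod 2) n P = q n := by
    intro n
    induction n using Nat.strong_induction_on with
    | _ n ih =>
      have e1 := hPC n
      have e2 := hQ n
      rw [map_sum] at e1 e2
      simp only [coeff_C_mul] at e1 e2
      rw [Finset.sum_range_succ, diag n, mul_one] at e1 e2
      have hsums : ∑ k ∈ range n, coeff (R := ZMod 2) k P * coeff (R := ZMod 2) n ((B+1)^k)
          = ∑ k ∈ range n, q k * coeff (R := ZMod 2) n ((B+1)^k) :=
        Finset.sum_congr rfl (fun k hk => by rw [ih k (Finset.mem_range.mp hk)])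
      have := e1.trans e2.symm
      rw [hsums] at this
      exact add_left_cancel this
  refine ⟨?_, ?_, ?_⟩
  · rw [hq 0]; simp [hqdef]
  · rw [hq 2]; simp [hqdef]
  · intro n hn0 hn2
    rw [hq n]; simp [hqdef, hn0, hn2]
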